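/- Let f_n, f be probability mass functions on ℕ with ‖f_n - f‖_{ℓ¹(g)} → 0 and let (m_n) be a sequence of positive integers tending to infinity. Then Σ_{k=0}^{m_n} f_n(k) g_{m_n}(k) → Σ_k f(k) g(k), where g_{m}(k) = -log( C(m,k)(k/m)^k((m-k)/m)^{m-k} ) and g(k) = log(k!) - k log k + k. -/

import Mathlib

/-- `g k = log(k! / (k^k e^{-k}))`. -/
noncomputable def g (k : ℕ) : ℝ :=
  Real.log (Nat.factorial k) - k * Real.log k + k

/-- `gBin m k = - log( C(m,k) (k/m)^k ((m-k)/m)^{m-k} )`. -/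
noncomputable def gBin (m k : ℕ) : ℝ :=
  - Real.log ((m.choose k : ℝ) * ((k : ℝ) / m) ^ k * (((m - k : ℕ) : ℝ) / m) ^ (m - k))


lemma g_zero : g 0 = 0 := by simp [g]

lemma g_succ_sub (n : ℕ) :
    g (n + 1) - g n = 1 - n * (Real.log (n + 1) - Real.log n) := by
  have h : (Nat.factorial (n+1) : ℝ) = (n+1 : ℝ) * (Nat.factorial n : ℝ) := by
    push_cast [Nat.factorial_succ]; ring
  have hl : Real.log (Nat.factorial (n+1) : ℝ)
      = Real.log ((n:ℝ)+1) + Real.log (Nat.factorial n : ℝ) := by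
    rw [h, Real.log_mul (by positivity) (by positivity)]
  simp only [g, hl]
  push_cast
  ring

lemma inc_nonneg (n : ℕ) : 0 ≤ g (n + 1) - g n := by
  rw [g_succ_sub]
  rcases Nat.eq_zero_or_pos n with rfl | hn
  · norm_num
  · have hn' : (0:ℝ) < n := by exact_mod_cast hn
    have h1 : Real.log ((n:ℝ)+1) - Real.log n = Real.log (((n:ℝ)+1)/n) := by
      rw [Real.log_div (by positivity) (by positivity)]
    have h2 : Real.log (((n:ℝ)+1)/n) ≤ ((n:ℝ)+1)/n - 1 :=
      Real.log_le_sub_one_of_pos (by positivity)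
    have h3 : ((n:ℝ)+1)/n - 1 = 1/n := by field_simp; ring
    have h4 : Real.log ((n:ℝ)+1) - Real.log n ≤ 1/n := by rw [h1]; linarith
    have h5 : (n:ℝ) * (Real.log ((n:ℝ)+1) - Real.log n) ≤ (n:ℝ) * (1/n) :=
      mul_le_mul_of_nonneg_left h4 (le_of_lt hn')
    have h6 : (n:ℝ) * (1/n) = 1 := by field_simp
    linarith

lemma inc_le (n : ℕ) : g (n + 1) - g n ≤ 1 / ((n:ℝ) + 1) := by
  rw [g_succ_sub]
  rcases Nat.eq_zero_or_pos n with rfl | hn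
  · norm_num
  · have hn' : (0:ℝ) < n := by exact_mod_cast hn
    have h1 : Real.log n - Real.log ((n:ℝ)+1) = Real.log ((n:ℝ)/((n:ℝ)+1)) := by
      rw [Real.log_div (by positivity) (by positivity)]
    have h2 : Real.log ((n:ℝ)/((n:ℝ)+1)) ≤ (n:ℝ)/((n:ℝ)+1) - 1 :=
      Real.log_le_sub_one_of_pos (by positivity)
    have h3 : (n:ℝ)/((n:ℝ)+1) - 1 = -(1/((n:ℝ)+1)) := by field_simp; ring
    have h4 : 1/((n:ℝ)+1) ≤ Real.log ((n:ℝ)+1) - Real.log n := by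
      have := h1 ▸ h2; linarith
    have h5 : (n:ℝ) * (1/((n:ℝ)+1)) ≤ (n:ℝ) * (Real.log ((n:ℝ)+1) - Real.log n) :=
      mul_le_mul_of_nonneg_left h4 (le_of_lt hn')
    have h6 : (n:ℝ) * (1/((n:ℝ)+1)) = 1 - 1/((n:ℝ)+1) := by field_simp; ring
    linarith

lemma g_mono : Monotone g :=
  monotone_nat_of_le_succ (fun n => by linarith [inc_nonneg n])

lemma g_nonneg (k : ℕ) : 0 ≤ g k := g_zero ▸ g_mono (Nat.zero_le k)

lemma g_sub_le (k m : ℕ) (h : k ≤ m) :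
    g m - g (m - k) ≤ k / (((m - k : ℕ) : ℝ) + 1) := by
  set j := m - k with hj
  have hjk : j + k = m := Nat.sub_add_cancel h
  have htel : ∑ i ∈ Finset.range k, (g (j + i + 1) - g (j + i)) = g m - g j := by
    have := Finset.sum_range_sub (fun i => g (j + i)) k
    simpa [hjk, add_assoc] using this
  rw [← htel]
  have hbound : ∀ i ∈ Finset.range k, g (j + i + 1) - g (j + i) ≤ 1 / ((j:ℝ) + 1) := by
    intro i _
    refine (inc_le (j + i)).trans ?_
    have : (j:ℝ) + 1 ≤ ((j + i : ℕ):ℝ) + 1 := by push_cast; linarith [Nat.cast_nonneg (α := ℝ) i]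
    exact one_div_le_one_div_of_le (by positivity) this
  calc ∑ i ∈ Finset.range k, (g (j + i + 1) - g (j + i))
      ≤ ∑ _i ∈ Finset.range k, 1 / ((j:ℝ) + 1) := Finset.sum_le_sum hbound
    _ = k / ((j:ℝ) + 1) := by simp [Finset.sum_const]; ring

lemma log_div_cast (a M : ℕ) (hM : 0 < M) :
    (a:ℝ) * Real.log ((a:ℝ)/M) = a * Real.log a - a * Real.log M := by
  rcases Nat.eq_zero_or_pos a with rfl | ha
  · simp
  · have ha' : (a:ℝ) ≠ 0 := by positivity
    have hM' : (M:ℝ) ≠ 0 := by positivity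
    rw [Real.log_div ha' hM']; ring

lemma gBin_eq (m k : ℕ) (hm : 1 ≤ m) (hk : k ≤ m) :
    gBin m k = g k + g (m - k) - g m := by
  set j := m - k with hj
  have hjk : j + k = m := Nat.sub_add_cancel hk
  have hc0 : (m.choose k : ℝ) ≠ 0 := by
    exact_mod_cast (Nat.choose_pos hk).ne'
  have hm' : (0:ℝ) < m := by exact_mod_cast hm
  have hp1 : ((k:ℝ)/m) ^ k ≠ 0 := by
    rcases Nat.eq_zero_or_pos k with rfl | hkpos
    · simp
    · have : (0:ℝ) < (k:ℝ)/m := by positivity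
      positivity
  have hp2 : ((j:ℝ)/m) ^ j ≠ 0 := by
    rcases Nat.eq_zero_or_pos j with hj0 | hjpos
    · rw [hj0]; simp
    · have hjp : (0:ℝ) < (j:ℝ) := by exact_mod_cast hjpos
      have : (0:ℝ) < (j:ℝ)/m := by positivity
      positivity
  have hchoose : (m.choose k : ℝ) = (Nat.factorial m : ℝ) / (Nat.factorial k * Nat.factorial j) := by
    rw [hj, Nat.cast_choose ℝ hk]
  have hlogc : Real.log (m.choose k : ℝ)
      = Real.log (Nat.factorial m : ℝ) - Real.log (Nat.factorial k : ℝ)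
        - Real.log (Nat.factorial j : ℝ) := by
    rw [hchoose, Real.log_div (by positivity) (by positivity),
      Real.log_mul (by positivity) (by positivity)]
    ring
  have hcast : ((m - k : ℕ) : ℝ) = (j:ℝ) := by rw [hj]
  have hsplit : Real.log ((m.choose k : ℝ) * ((k:ℝ)/m) ^ k * ((j:ℝ)/m) ^ j)
      = Real.log (m.choose k : ℝ) + (k:ℝ) * Real.log ((k:ℝ)/m)
        + (j:ℝ) * Real.log ((j:ℝ)/m) := by
    rw [Real.log_mul (mul_ne_zero hc0 hp1) hp2, Real.log_mul hc0 hp1,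
      Real.log_pow, Real.log_pow]
  have hmr : (m:ℝ) = (j:ℝ) + (k:ℝ) := by exact_mod_cast hjk.symm
  simp only [gBin, g, ← hj, hsplit, hlogc]
  rw [log_div_cast k m hm, log_div_cast j m hm, hmr]
  ring

lemma gBin_nonneg (m k : ℕ) (hk : k ≤ m) : 0 ≤ gBin m k := by
  set t := (m.choose k : ℝ) * ((k:ℝ)/m) ^ k * (((m - k : ℕ):ℝ)/m) ^ (m - k) with ht
  have ht0 : 0 ≤ t := by positivity
  have ht1 : t ≤ 1 := by
    rcases Nat.eq_zero_or_pos m with rfl | hm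
    · interval_cases k
      simp [ht]
    · have hm' : (0:ℝ) < m := by exact_mod_cast hm
      have hsum := add_pow ((k:ℝ)/m) (((m - k : ℕ):ℝ)/m) m
      have hone : (k:ℝ)/m + ((m - k : ℕ):ℝ)/m = 1 := by
        rw [← add_div, ← Nat.cast_add, Nat.add_sub_cancel' hk, div_self hm'.ne']
      rw [hone, one_pow] at hsum
      have hmem : k ∈ Finset.range (m + 1) := Finset.mem_range.mpr (Nat.lt_succ_of_le hk)
      have hterm := Finset.single_le_sum (f := fun i =>
          ((k:ℝ)/m) ^ i * (((m - k : ℕ):ℝ)/m) ^ (m - i) * (m.choose i))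
        (fun i _ => by positivity) hmem
      rw [← hsum] at hterm
      calc t = ((k:ℝ)/m) ^ k * (((m - k : ℕ):ℝ)/m) ^ (m - k) * (m.choose k) := by ring
        _ ≤ 1 := hterm
  exact neg_nonneg.mpr (Real.log_nonpos ht0 ht1)

lemma gBin_le (m k : ℕ) (hk : k ≤ m) : gBin m k ≤ g k := by
  rcases Nat.eq_zero_or_pos m with rfl | hm
  · interval_cases k
    simp [gBin, g_zero]
  · rw [gBin_eq m k hm hk]
    have := g_mono (Nat.sub_le m k)
    linarith

lemma gBin_tendsto (k : ℕ) :
    Filter.Tendsto (fun M => gBin M k) Filter.atTop (nhds (g k)) := by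
  have hsub : Filter.Tendsto (fun M : ℕ => g M - g (M - k)) Filter.atTop (nhds 0) := by
    have hup : Filter.Tendsto (fun M : ℕ => (k:ℝ) / (((M - k : ℕ):ℝ) + 1))
        Filter.atTop (nhds 0) := by
      apply Filter.Tendsto.div_atTop (tendsto_const_nhds)
      have h1 : Filter.Tendsto (fun M : ℕ => M - k) Filter.atTop Filter.atTop :=
        Filter.tendsto_sub_atTop_nat k
      exact Filter.tendsto_atTop_add_const_right _ 1
        ((tendsto_natCast_atTop_atTop).comp h1)
    refine tendsto_of_tendsto_of_tendsto_of_le_of_le' tendsto_const_nhds hup ?_ ?_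
    · filter_upwards [Filter.eventually_atTop.mpr ⟨k, fun M hM => hM⟩] with M hM
      have hMk : M - k + k = M := Nat.sub_add_cancel hM
      have := g_mono (Nat.sub_le M k)
      linarith
    · filter_upwards [Filter.eventually_atTop.mpr ⟨k, fun M hM => hM⟩] with M hM
      exact g_sub_le k M hM
  have : Filter.Tendsto (fun M : ℕ => g k - (g M - g (M - k))) Filter.atTop
      (nhds (g k - 0)) := tendsto_const_nhds.sub hsub
  rw [sub_zero] at this
  refine this.congr' ?_
  filter_upwards [Filter.eventually_atTop.mpr ⟨max 1 k, fun M hM => hM⟩] with M hM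
  rw [gBin_eq M k (le_trans (le_max_left 1 k) hM) (le_trans (le_max_right 1 k) hM)]
  ring

/-- if `f_n, f` are pmfs on `ℕ` with `‖f_n - f‖_{ℓ¹(g)} → 0` and
`m_n → ∞`, then `Σ_{k=0}^{m_n} f_n(k) g_{m_n}(k) → Σ_k f(k) g(k)`. -/
theorem weighted_binomial_sum_tendsto (f : ℕ → ℝ) (F : ℕ → ℕ → ℝ) (m : ℕ → ℕ)
    (hf0 : ∀ k, 0 ≤ f k) (hf1 : HasSum f 1)
    (hF0 : ∀ n k, 0 ≤ F n k) (hF1 : ∀ n, HasSum (F n) 1)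
    (hfg : Summable (fun k => f k * g k))
    (hdiff : ∀ n, Summable (fun k => |F n k - f k| * g k))
    (hconv : Filter.Tendsto (fun n => ∑' k, |F n k - f k| * g k) Filter.atTop (nhds 0))
    (hm : Filter.Tendsto m Filter.atTop Filter.atTop) :
    Filter.Tendsto
      (fun n => ∑ k ∈ Finset.range (m n + 1), F n k * gBin (m n) k)
      Filter.atTop (nhds (∑' k, f k * g k)) := by
  set S : ℕ → ℝ := fun n => ∑ k ∈ Finset.range (m n + 1), F n k * gBin (m n) k with hS
  set A : ℕ → ℝ := fun n => ∑ k ∈ Finset.range (m n + 1), f k * gBin (m n) k with hA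
  set H : ℕ → ℕ → ℝ := fun n k => if k ≤ m n then f k * gBin (m n) k else 0 with hH
  have hmem : ∀ n k, k ∈ Finset.range (m n + 1) ↔ k ≤ m n := by
    intro n k; rw [Finset.mem_range, Nat.lt_succ_iff]
  have hAtsum : ∀ n, A n = ∑' k, H n k := by
    intro n
    rw [hA]
    have h1 : ∑' k, H n k = ∑ k ∈ Finset.range (m n + 1), H n k := by
      apply tsum_eq_sum
      intro b hb
      simp only [hH]
      rw [if_neg (fun h => hb ((hmem n b).mpr h))]
    rw [h1]
    apply Finset.sum_congr rfl
    intro k hk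
    simp only [hH]
    rw [if_pos ((hmem n k).mp hk)]
  -- step 1: A → T by dominated convergence
  have step1 : Filter.Tendsto A Filter.atTop (nhds (∑' k, f k * g k)) := by
    simp only [funext hAtsum]
    apply tendsto_tsum_of_dominated_convergence (bound := fun k => f k * g k) hfg
    · intro k
      have hbase : Filter.Tendsto (fun n => f k * gBin (m n) k) Filter.atTop
          (nhds (f k * g k)) := (((gBin_tendsto k).comp hm)).const_mul (f k)
      refine hbase.congr' ?_
      filter_upwards [hm.eventually_ge_atTop k] with n hn
      simp only [hH]
      rw [if_pos hn]
    · filter_upwards with n k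
      simp only [hH]
      by_cases h : k ≤ m n
      · rw [if_pos h]
        rw [Real.norm_eq_abs, abs_of_nonneg (mul_nonneg (hf0 k) (gBin_nonneg _ _ h))]
        exact mul_le_mul_of_nonneg_left (gBin_le _ _ h) (hf0 k)
      · rw [if_neg h]
        simpa using mul_nonneg (hf0 k) (g_nonneg k)
  -- step 2: S - A → 0
  have step2 : Filter.Tendsto (fun n => S n - A n) Filter.atTop (nhds 0) := by
    apply squeeze_zero_norm (a := fun n => ∑' k, |F n k - f k| * g k) _ hconv
    intro n
    have hre : S n - A n = ∑ k ∈ Finset.range (m n + 1), (F n k - f k) * gBin (m n) k := by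
      rw [hS, hA, ← Finset.sum_sub_distrib]
      exact Finset.sum_congr rfl (fun k _ => by ring)
    rw [Real.norm_eq_abs, hre]
    calc |∑ k ∈ Finset.range (m n + 1), (F n k - f k) * gBin (m n) k|
        ≤ ∑ k ∈ Finset.range (m n + 1), |(F n k - f k) * gBin (m n) k| :=
          Finset.abs_sum_le_sum_abs _ _
      _ ≤ ∑ k ∈ Finset.range (m n + 1), |F n k - f k| * g k := by
          apply Finset.sum_le_sum
          intro k hk
          rw [abs_mul, abs_of_nonneg (gBin_nonneg _ _ ((hmem n k).mp hk))]
          exact mul_le_mul_of_nonneg_left (gBin_le _ _ ((hmem n k).mp hk)) (abs_nonneg _)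
      _ ≤ ∑' k, |F n k - f k| * g k := by
          apply Summable.sum_le_tsum _ _ (hdiff n)
          intro k _
          exact mul_nonneg (abs_nonneg _) (g_nonneg k)
  have := step1.add step2
  rw [add_zero] at this
  exact this.congr (fun n => by ring)
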